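/- Let f : ℝ^m × ℝ^n → ℝ be ℓ-smooth, f(·,y) L-Lipschitz for all y ∈ Y, f(x,·) concave on convex bounded Y. Let Φ(x) = max_{y∈Y} f(x,y) and Φ_{1/2ℓ} its Moreau envelope. For the GDA x-update x_t = x_{t−1} − η_x ∇_x f(x_{t−1}, y_{t−1}), with Δ_{t−1} = Φ(x_{t−1}) − f(x_{t−1}, y_{t−1}), one has Φ_{1/2ℓ}(x_t) ≤ Φ_{1/2ℓ}(x_{t−1}) + 2η_x ℓ Δ_{t−1} − (η_x/4)‖∇Φ_{1/2ℓ}(x_{t−1})‖² + η_x² ℓ L². -/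

import Mathlib

open Set
open scoped RealInnerProductSpace
section AuxLemmas
open Metric Bornology Filter
open scoped Topology

lemma aux_bddBelow {W : Type*} [NormedAddCommGroup W] [NormedSpace ℝ W] [FiniteDimensional ℝ W]
    {s : Set W} (hconv : Convex ℝ s) (hcomp : IsCompact s) (hspan : affineSpan ℝ s = ⊤)
    {g : W → ℝ} (hg : ConvexOn ℝ s g) : BddBelow (g '' s) := by
  obtain ⟨q, hq⟩ := hconv.interior_nonempty_iff_affineSpan_eq_top.mpr hspan
  have hs_nhds : s ∈ nhds q := mem_interior_iff_mem_nhds.mp hq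
  obtain ⟨b, hqb, hbs⟩ := exists_mem_interior_convexHull_affineBasis hs_nhds
  have hbdd : BddAbove (g '' convexHull ℝ (Set.range b)) :=
    hg.bddAbove_convexHull ((subset_convexHull ℝ _).trans hbs)
      (((Set.finite_range b).image g).bddAbove)
  obtain ⟨M, hM⟩ := hbdd
  obtain ⟨r, hr, hball⟩ := Metric.mem_nhds_iff.mp (mem_interior_iff_mem_nhds.mp hqb)
  obtain ⟨D, hD⟩ := hcomp.isBounded.subset_closedBall q
  have hD0 : 0 ≤ D := by
    have := hD (interior_subset hq); simpa using this
  set M' : ℝ := max M (g q) with hM'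
  set lam : ℝ := (r/2) / (r/2 + D) with hlam
  have hlam0 : 0 < lam := by positivity
  have hlam1 : lam ≤ 1 := by
    rw [hlam, div_le_one (by positivity)]; linarith
  have hgqM : g q ≤ M' := le_max_right _ _
  refine ⟨M' + (g q - M') / lam, ?_⟩
  rintro _ ⟨w, hw, rfl⟩
  rcases eq_or_ne w q with rfl | hwq
  · have h1 : (g w - M') / lam ≤ g w - M' := by
      rw [div_le_iff₀ hlam0]
      nlinarith
    linarith
  · have hnw : 0 < ‖q - w‖ := by
      rw [norm_pos_iff, sub_ne_zero]; exact fun h => hwq h.symm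
    set t : ℝ := (r/2) / ‖q - w‖ with ht
    have ht0 : 0 < t := by positivity
    set u : W := q + t • (q - w) with hu
    have huball : u ∈ ball q r := by
      rw [mem_ball, dist_eq_norm]
      have : u - q = t • (q - w) := by rw [hu]; abel
      rw [this, norm_smul, Real.norm_eq_abs, abs_of_pos ht0, ht]
      rw [div_mul_cancel₀ _ hnw.ne']
      linarith
    have hus : u ∈ s := hbs (hball huball)
    have hgu : g u ≤ M := hM ⟨u, hball huball, rfl⟩
    set a : ℝ := t / (1 + t) with ha
    set c : ℝ := 1 / (1 + t) with hc
    have hab : a + c = 1 := by rw [ha, hc]; field_simp; ring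
    have ha0 : 0 ≤ a := by positivity
    have hc0 : 0 ≤ c := by positivity
    have h1t : (1 : ℝ) + t ≠ 0 := by positivity
    have hcombo : a • w + c • u = q := by
      rw [hu, ha, hc]
      match_scalars <;> (field_simp; try ring)
    have hkey : g q ≤ a * g w + c * M' := by
      have := hg.2 hw hus ha0 hc0 hab
      rw [hcombo] at this
      have : g q ≤ a * g w + c * g u := by simpa using this
      have hMM' : M ≤ M' := le_max_left _ _
      nlinarith
    have halam : lam ≤ a := by
      have hwd : ‖q - w‖ ≤ D := by
        have := hD hw
        rw [mem_closedBall, dist_eq_norm] at this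
        rw [norm_sub_rev]; linarith
      have haeq : a = (r/2) / (r/2 + ‖q - w‖) := by
        rw [ha, ht]; rw [div_eq_div_iff (by positivity) (by positivity)]; field_simp; ring
      rw [haeq, hlam]
      apply div_le_div_of_nonneg_left (by positivity) (by positivity)
      linarith
    have ha1 : a ≤ 1 := by linarith
    -- from hkey: a * (g w - M') ≥ g q - M' since c = 1 - a
    have hc1 : c = 1 - a := by linarith
    have hmain : g q - M' ≤ a * (g w - M') := by rw [hc1] at hkey; nlinarith
    have ha0' : 0 < a := by rw [ha]; positivity
    have hfin : (g q - M') / lam ≤ g w - M' := by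
      rw [div_le_iff₀ hlam0]
      nlinarith [mul_nonneg hlam0.le (sub_nonneg.2 hmain),
        mul_nonneg (sub_nonneg.2 hgqM) (sub_nonneg.2 halam)]
    linarith
lemma concaveOn_bddAbove {E : Type*} [NormedAddCommGroup E] [NormedSpace ℝ E]
    [FiniteDimensional ℝ E] {Y : Set E} (hconv : Convex ℝ Y) (hcomp : IsCompact Y)
    (hne : Y.Nonempty) {h : E → ℝ} (hh : ConcaveOn ℝ Y h) : BddAbove (h '' Y) := by
  obtain ⟨p, hp⟩ := hne
  set V : Submodule ℝ E := vectorSpan ℝ Y with hV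
  have hKdef : ∀ x : E, x ∈ (fun z => z + p) ⁻¹' Y ↔ x + p ∈ Y := fun x => Iff.rfl
  set K : Set E := (fun z => z + p) ⁻¹' Y with hK
  have hKV : K ⊆ (V : Set E) := by
    intro x hx
    have : (x + p) -ᵥ p ∈ vectorSpan ℝ Y := vsub_mem_vectorSpan ℝ hx hp
    simpa using this
  have hKcomp : IsCompact K := (Homeomorph.addRight p).isCompact_preimage.mpr hcomp
  have hKconv : Convex ℝ K := by
    intro x hx y hy a b ha hb hab
    have hmix : (a • x + b • y) + p = a • (x + p) + b • (y + p) := by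
      match_scalars <;> linarith [hab]
    show (a • x + b • y) + p ∈ Y
    rw [hmix]
    exact hconv hx hy ha hb hab
  set Z : Set V := Subtype.val ⁻¹' K with hZ
  have hZ0 : (0 : V) ∈ Z := by
    simp only [hZ, mem_preimage, Submodule.coe_zero, hK, zero_add]
    exact hp
  have hZconv : Convex ℝ Z := hKconv.linear_preimage V.subtype
  have hZcomp : IsCompact Z := by
    have hVclosed : IsClosed (V : Set E) := V.closed_of_finiteDimensional
    exact hVclosed.isClosedEmbedding_subtypeVal.isCompact_preimage hKcomp
  have hvalZ : Subtype.val '' Z = K := by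
    ext x
    constructor
    · rintro ⟨⟨x, hxV⟩, hxZ, rfl⟩; exact hxZ
    · intro hxK; exact ⟨⟨x, hKV hxK⟩, hxK, rfl⟩
  have hspanK : Submodule.span ℝ K = V := by
    apply le_antisymm
    · rw [Submodule.span_le]; exact hKV
    · rw [hV]
      rw [vectorSpan_def]
      rw [Submodule.span_le]
      rintro v ⟨y1, hy1, y2, hy2, rfl⟩
      have h1 : y1 - p ∈ K := by simp [hK, hy1]
      have h2 : y2 - p ∈ K := by simp [hK, hy2]
      show y1 -ᵥ y2 ∈ (Submodule.span ℝ K : Set E)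
      have heq : y1 -ᵥ y2 = (y1 - p) - (y2 - p) := by rw [vsub_eq_sub]; abel
      rw [heq]
      exact sub_mem (Submodule.subset_span h1) (Submodule.subset_span h2)
  have hspanZ : Submodule.span ℝ Z = ⊤ := by
    apply Submodule.map_injective_of_injective V.injective_subtype
    rw [Submodule.map_span, Submodule.map_top, Submodule.range_subtype]
    have hv : ⇑V.subtype '' Z = K := hvalZ
    rw [hv, hspanK]
  have haff : affineSpan ℝ Z = ⊤ := by
    rw [AffineSubspace.affineSpan_eq_top_iff_vectorSpan_eq_top_of_nonempty (k := ℝ) (V := ↥V)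
      (P := ↥V) ⟨0, hZ0⟩]
    apply le_antisymm le_top
    rw [← hspanZ, vectorSpan_def]
    apply Submodule.span_mono
    intro z hz
    exact ⟨z, hz, 0, hZ0, by simp⟩
  set g : V → ℝ := fun v => -h ((v : E) + p) with hg
  have hmemY : ∀ v : V, v ∈ Z → (v : E) + p ∈ Y := fun v hv => hv
  have hgconv : ConvexOn ℝ Z g := by
    refine ⟨hZconv, fun v hv w hw a b ha hb hab => ?_⟩
    have hcombo : ((↑(a • v + b • w) : E) + p) = a • ((v : E) + p) + b • ((w : E) + p) := by
      push_cast
      match_scalars <;> linarith [hab]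
    have := hh.2 (hmemY v hv) (hmemY w hw) ha hb hab
    simp only [smul_eq_mul] at this
    simp only [hg, smul_eq_mul]
    rw [hcombo]
    linarith
  obtain ⟨c, hc⟩ := aux_bddBelow hZconv hZcomp haff hgconv
  refine ⟨-c, ?_⟩
  rintro _ ⟨y, hy, rfl⟩
  have hyV : y - p ∈ V := by
    have : y -ᵥ p ∈ vectorSpan ℝ Y := vsub_mem_vectorSpan ℝ hy hp
    simpa using this
  have hvZ : (⟨y - p, hyV⟩ : V) ∈ Z := by
    simp only [hZ, mem_preimage, hK, sub_add_cancel]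
    exact hy
  have := hc ⟨⟨y - p, hyV⟩, hvZ, rfl⟩
  simp only [hg, sub_add_cancel] at this
  linarith

lemma grad_norm_le {F : Type*} [NormedAddCommGroup F] [InnerProductSpace ℝ F] [CompleteSpace F]
    {φ : F → ℝ} {g : F} {x : F} {L : ℝ} (hL : 0 ≤ L)
    (hg : HasGradientAt φ g x) (hlip : ∀ x', |φ x - φ x'| ≤ L * ‖x - x'‖) : ‖g‖ ≤ L := by
  rcases eq_or_ne g 0 with h0 | h0
  · simp [h0, hL]
  have hgpos : 0 < ‖g‖ := norm_pos_iff.mpr h0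
  have hc : HasDerivAt (fun t : ℝ => x + t • g) g 0 := by
    simpa using ((hasDerivAt_id (0 : ℝ)).smul_const g).const_add x
  have hφ : HasDerivAt (fun t : ℝ => φ (x + t • g)) ⟪g, g⟫ 0 := by
    have h1 : HasFDerivAt φ (InnerProductSpace.toDual ℝ F g) ((fun t : ℝ => x + t • g) 0) := by
      simpa using hg.hasFDerivAt
    have hh := h1.comp_hasDerivAt 0 hc
    simp [Function.comp, InnerProductSpace.toDual_apply_apply] at hh ⊢; exact hh
  have hslope := hasDerivAt_iff_tendsto_slope.mp hφ
  have hslope' : Tendsto (slope (fun t : ℝ => φ (x + t • g)) 0) (𝓝[>] 0) (𝓝 ⟪g, g⟫) :=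
    hslope.mono_left (nhdsWithin_mono 0 (fun t ht => ne_of_gt ht))
  have hbound : ⟪g, g⟫ ≤ L * ‖g‖ := by
    refine le_of_tendsto hslope' ?_
    filter_upwards [self_mem_nhdsWithin] with t ht
    have ht0 : 0 < t := ht
    have hn : ‖x - (x + t • g)‖ = t * ‖g‖ := by
      rw [show x - (x + t • g) = -(t • g) by abel, norm_neg, norm_smul,
        Real.norm_eq_abs, abs_of_pos ht0]
    have h2 : φ (x + t • g) - φ x ≤ L * (t * ‖g‖) := by
      have h1 := hlip (x + t • g)
      rw [abs_sub_comm, hn] at h1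
      exact (le_abs_self _).trans h1
    rw [slope_def_field]
    simp only [zero_smul, add_zero, sub_zero]
    rw [div_le_iff₀ ht0]
    nlinarith
  have : ‖g‖ * ‖g‖ ≤ L * ‖g‖ := by
    rwa [real_inner_self_eq_norm_mul_norm] at hbound
  exact le_of_mul_le_mul_right this hgpos

lemma descent_lb {F : Type*} [NormedAddCommGroup F] [InnerProductSpace ℝ F] [CompleteSpace F]
    {φ : F → ℝ} {G : F → F} (hG : ∀ z, HasGradientAt φ (G z) z)
    {l : ℝ} (hl : 0 ≤ l) (hlip : ∀ u v, ‖G u - G v‖ ≤ l * ‖u - v‖)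
    (x d : F) : φ x + ⟪G x, d⟫ - l / 2 * ‖d‖ ^ 2 ≤ φ (x + d) := by
  set χ : ℝ → ℝ := fun t => φ (x + t • d) - t * ⟪G x, d⟫ + l / 2 * t ^ 2 * ‖d‖ ^ 2 with hχdef
  have hχ : ∀ t : ℝ, HasDerivAt χ
      (⟪G (x + t • d), d⟫ - ⟪G x, d⟫ + l / 2 * (2 * t) * ‖d‖ ^ 2) t := by
    intro t
    have hc : HasDerivAt (fun s : ℝ => x + s • d) d t := by
      simpa using ((hasDerivAt_id t).smul_const d).const_add x
    have h1 : HasDerivAt (fun s : ℝ => φ (x + s • d)) ⟪G (x + t • d), d⟫ t := by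
      have hF : HasFDerivAt φ (InnerProductSpace.toDual ℝ F (G (x + t • d)))
          ((fun s : ℝ => x + s • d) t) := by simpa using (hG (x + t • d)).hasFDerivAt
      have hh := hF.comp_hasDerivAt t hc
      simp [Function.comp, InnerProductSpace.toDual_apply_apply] at hh ⊢; exact hh
    have h2 : HasDerivAt (fun s : ℝ => s * ⟪G x, d⟫) ⟪G x, d⟫ t := by
      simpa using (hasDerivAt_id t).mul_const (⟪G x, d⟫ : ℝ)
    have h3 : HasDerivAt (fun s : ℝ => l / 2 * s ^ 2 * ‖d‖ ^ 2)
        (l / 2 * (2 * t) * ‖d‖ ^ 2) t := by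
      have := ((hasDerivAt_pow 2 t).const_mul (l / 2)).mul_const (‖d‖ ^ 2)
      exact this.congr_deriv (by push_cast; ring)
    exact (h1.sub h2).add h3
  have hmono : MonotoneOn χ (Icc (0 : ℝ) 1) := by
    apply monotoneOn_of_deriv_nonneg (convex_Icc 0 1)
    · exact Continuous.continuousOn (by
        have : Differentiable ℝ χ := fun t => (hχ t).differentiableAt
        exact this.continuous)
    · intro t _
      exact (hχ t).differentiableAt.differentiableWithinAt
    · intro t ht
      rw [interior_Icc] at ht
      rw [(hχ t).deriv]
      have hkey : ⟪G x, d⟫ - ⟪G (x + t • d), d⟫ ≤ l * t * ‖d‖ ^ 2 := by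
        have h4 : ⟪G x - G (x + t • d), d⟫ ≤ ‖G x - G (x + t • d)‖ * ‖d‖ :=
          real_inner_le_norm _ _
        have h5 : ‖G x - G (x + t • d)‖ ≤ l * (t * ‖d‖) := by
          have := hlip x (x + t • d)
          have hn : ‖x - (x + t • d)‖ = t * ‖d‖ := by
            rw [show x - (x + t • d) = -(t • d) by abel, norm_neg, norm_smul,
              Real.norm_eq_abs, abs_of_pos ht.1]
          rwa [hn] at this
        have h6 : ⟪G x - G (x + t • d), d⟫ = ⟪G x, d⟫ - ⟪G (x + t • d), d⟫ :=
          inner_sub_left _ _ _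
        nlinarith [norm_nonneg d, mul_le_mul_of_nonneg_right h5 (norm_nonneg d)]
      linarith
  have h01 := hmono (left_mem_Icc.mpr zero_le_one) (right_mem_Icc.mpr zero_le_one) zero_le_one
  simp only [hχdef, zero_smul, add_zero, one_smul, zero_mul, one_pow, mul_one, one_mul,
    zero_pow, mul_zero, sub_zero] at h01
  have h01' : φ x ≤ φ (x + d) - ⟪G x, d⟫ + l / 2 * ‖d‖ ^ 2 := by
    linarith [h01, show l / 2 * (0:ℝ) ^ 2 * ‖d‖ ^ 2 = 0 by ring]
  linarith
end AuxLemmas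

/-- Moreau-envelope descent inequality for the GDA x-update in the
nonconvex-concave setting: with `Δ = Φ(x) − f(x,y)` and
`∇Φ_{1/2ℓ}(x) = 2ℓ(x − prox x)`,
`Φ_{1/2ℓ}(x − η_x∇_x f(x,y)) ≤ Φ_{1/2ℓ}(x) + 2η_x ℓ Δ − (η_x/4)‖∇Φ_{1/2ℓ}(x)‖² + η_x²ℓL²`. -/
theorem statement12 {m n : ℕ} (f : EuclideanSpace ℝ (Fin m) → EuclideanSpace ℝ (Fin n) → ℝ)
    (ℓ L ηx : ℝ) (hℓ : 0 < ℓ) (hL : 0 < L) (hηx : 0 < ηx)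
    (Y : Set (EuclideanSpace ℝ (Fin n))) (hYconv : Convex ℝ Y) (hYcomp : IsCompact Y)
    (hYne : Y.Nonempty)
    (gx : EuclideanSpace ℝ (Fin m) → EuclideanSpace ℝ (Fin n) → EuclideanSpace ℝ (Fin m))
    (hgx : ∀ x y, HasGradientAt (fun x' => f x' y) (gx x y) x)
    (hsmooth : ∀ x x' y y', ‖gx x y - gx x' y'‖ ≤ ℓ * (‖x - x'‖ + ‖y - y'‖))
    (hconc : ∀ x, ConcaveOn ℝ Y (f x))
    (hLip : ∀ y ∈ Y, ∀ x x', |f x y - f x' y| ≤ L * ‖x - x'‖)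
    (Φ : EuclideanSpace ℝ (Fin m) → ℝ) (hΦ : ∀ x, Φ x = sSup (f x '' Y))
    (prox : EuclideanSpace ℝ (Fin m) → EuclideanSpace ℝ (Fin m))
    (hprox : ∀ x, IsMinOn (fun w => Φ w + ℓ * ‖w - x‖ ^ 2) univ (prox x))
    (env : EuclideanSpace ℝ (Fin m) → ℝ)
    (henv : ∀ x, env x = Φ (prox x) + ℓ * ‖prox x - x‖ ^ 2) :
    ∀ x₀, ∀ y₀ ∈ Y,
      env (x₀ - ηx • gx x₀ y₀) ≤ env x₀ + 2 * ηx * ℓ * (Φ x₀ - f x₀ y₀)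
        - (ηx / 4) * ‖(2 * ℓ) • (x₀ - prox x₀)‖ ^ 2 + ηx ^ 2 * ℓ * L ^ 2 := by
  intro x₀ y₀ hy₀
  have hlipG : ∀ u v, ‖gx u y₀ - gx v y₀‖ ≤ ℓ * ‖u - v‖ := by
    intro u v
    have := hsmooth u v y₀ y₀
    simpa using this
  have hgL : ‖gx x₀ y₀‖ ≤ L :=
    grad_norm_le hL.le (hgx x₀ y₀) (fun x' => hLip y₀ hy₀ x₀ x')
  have hdesc : f x₀ y₀ + ⟪gx x₀ y₀, prox x₀ - x₀⟫ - ℓ / 2 * ‖prox x₀ - x₀‖ ^ 2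
      ≤ f (prox x₀) y₀ := by
    have := descent_lb (φ := fun x => f x y₀) (G := fun x => gx x y₀)
      (fun z => hgx z y₀) hℓ.le hlipG x₀ (prox x₀ - x₀)
    rw [show x₀ + (prox x₀ - x₀) = prox x₀ by abel] at this
    exact this
  have hbdd : BddAbove (f (prox x₀) '' Y) :=
    concaveOn_bddAbove hYconv hYcomp hYne (hconc (prox x₀))
  have hfA : f (prox x₀) y₀ ≤ Φ (prox x₀) := by
    rw [hΦ]
    exact le_csSup hbdd ⟨y₀, hy₀, rfl⟩
  have hF3 : Φ (prox x₀) + ℓ * ‖prox x₀ - x₀‖ ^ 2 ≤ Φ x₀ := by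
    have := isMinOn_iff.mp (hprox x₀) x₀ (mem_univ _)
    simpa using this
  have hF1 : env (x₀ - ηx • gx x₀ y₀) ≤
      Φ (prox x₀) + ℓ * ‖prox x₀ - (x₀ - ηx • gx x₀ y₀)‖ ^ 2 := by
    rw [henv]
    exact isMinOn_iff.mp (hprox (x₀ - ηx • gx x₀ y₀)) (prox x₀) (mem_univ _)
  have hexp : ‖prox x₀ - (x₀ - ηx • gx x₀ y₀)‖ ^ 2 =
      ‖prox x₀ - x₀‖ ^ 2 + 2 * ηx * ⟪prox x₀ - x₀, gx x₀ y₀⟫ + ηx ^ 2 * ‖gx x₀ y₀‖ ^ 2 := by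
    rw [show prox x₀ - (x₀ - ηx • gx x₀ y₀) = (prox x₀ - x₀) + ηx • gx x₀ y₀ by abel]
    rw [norm_add_sq_real, real_inner_smul_right, norm_smul, Real.norm_eq_abs, abs_of_pos hηx]
    ring
  have hq : ‖(2 * ℓ) • (x₀ - prox x₀)‖ ^ 2 = 4 * ℓ ^ 2 * ‖prox x₀ - x₀‖ ^ 2 := by
    rw [norm_smul, Real.norm_eq_abs, abs_of_pos (by positivity : (0:ℝ) < 2 * ℓ), norm_sub_rev]
    ring
  have hE0 : env x₀ = Φ (prox x₀) + ℓ * ‖prox x₀ - x₀‖ ^ 2 := henv x₀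
  have hip : ⟪prox x₀ - x₀, gx x₀ y₀⟫ = ⟪gx x₀ y₀, prox x₀ - x₀⟫ := real_inner_comm _ _
  have hG2 : ‖gx x₀ y₀‖ ^ 2 ≤ L ^ 2 := by nlinarith [norm_nonneg (gx x₀ y₀)]
  have c2nn : (0:ℝ) ≤ 2 * ηx * ℓ := by positivity
  have key1 : env (x₀ - ηx • gx x₀ y₀) ≤ Φ (prox x₀) + ℓ * ‖prox x₀ - x₀‖ ^ 2
      + 2 * ηx * ℓ * ⟪gx x₀ y₀, prox x₀ - x₀⟫ + ηx ^ 2 * ℓ * ‖gx x₀ y₀‖ ^ 2 := by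
    calc env (x₀ - ηx • gx x₀ y₀) ≤ Φ (prox x₀) + ℓ * ‖prox x₀ - (x₀ - ηx • gx x₀ y₀)‖ ^ 2 := hF1
      _ = Φ (prox x₀) + ℓ * ‖prox x₀ - x₀‖ ^ 2
          + 2 * ηx * ℓ * ⟪gx x₀ y₀, prox x₀ - x₀⟫ + ηx ^ 2 * ℓ * ‖gx x₀ y₀‖ ^ 2 := by
        rw [hexp, hip]; ring
  have key2 : ⟪gx x₀ y₀, prox x₀ - x₀⟫ ≤ Φ (prox x₀) - f x₀ y₀ + ℓ / 2 * ‖prox x₀ - x₀‖ ^ 2 := by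
    linarith
  have key3 := mul_le_mul_of_nonneg_left key2 c2nn
  have key4 := mul_le_mul_of_nonneg_left hG2 (by positivity : (0:ℝ) ≤ ηx ^ 2 * ℓ)
  have key5 := mul_le_mul_of_nonneg_left
    (by linarith : Φ (prox x₀) ≤ Φ x₀ - ℓ * ‖prox x₀ - x₀‖ ^ 2) c2nn
  rw [hq]
  nlinarith [key1, key3, key4, key5, hE0]
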